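/- (Main triangle inequality for the D-feature distance) Let Ω ⊆ ℝ be nonempty and bounded, and let s = sup{|x - y| : x, y ∈ Ω}. For F1, F2, F3 each consisting of a D-feature coordinate in Ω and an I-feature coordinate in ℝ, define c_{st} = min(|F_s^k - F_t^k|, 1) and g(F_s, F_t) = c_{st}·s + (1 - c_{st})·|F_s^j - F_t^j|. Then g(F1, F2) + g(F1, F3) ≥ g(F2, F3). -/
import Mathlib


/-- D-feature distance: `.1` is the D-feature coordinate (in Ω), `.2` the I-feature one. -/
def gD (s : ℝ) (F1 F2 : ℝ × ℝ) : ℝ :=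
  min |F1.2 - F2.2| 1 * s + (1 - min |F1.2 - F2.2| 1) * |F1.1 - F2.1|

lemma min_tri (x y z : ℝ) : min |x - z| 1 ≤ min |x - y| 1 + min |y - z| 1 := by
  have h : |x - z| ≤ |x - y| + |y - z| := abs_sub_le x y z
  rcases le_total 1 |x - y| with hb | hb
  · have : (1:ℝ) ≤ min |x - y| 1 + min |y - z| 1 := by
      have := abs_nonneg (y - z)
      simp [min_eq_right hb]
    exact le_trans (min_le_right _ _) this
  rcases le_total 1 |y - z| with hc | hc
  · have : (1:ℝ) ≤ min |x - y| 1 + min |y - z| 1 := by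
      have := abs_nonneg (x - y)
      simp [min_eq_right hc]
    exact le_trans (min_le_right _ _) this
  · rw [min_eq_left hb, min_eq_left hc]
    exact le_trans (min_le_left _ _) h

/-- main triangle inequality for the D-feature distance. -/
theorem stmt_3 (Ω : Set ℝ) (hne : Ω.Nonempty) (hbdd : Bornology.IsBounded Ω)
    (s : ℝ) (hs : s = sSup {d : ℝ | ∃ x ∈ Ω, ∃ y ∈ Ω, d = |x - y|})
    (F1 F2 F3 : ℝ × ℝ) (h1 : F1.1 ∈ Ω) (h2 : F2.1 ∈ Ω) (h3 : F3.1 ∈ Ω) :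
    gD s F2 F3 ≤ gD s F1 F2 + gD s F1 F3 := by
  obtain ⟨C, hC⟩ := Metric.isBounded_iff.mp hbdd
  have hbdd' : BddAbove {d : ℝ | ∃ x ∈ Ω, ∃ y ∈ Ω, d = |x - y|} := by
    refine ⟨C, fun d hd => ?_⟩
    obtain ⟨x, hx, y, hy, rfl⟩ := hd
    simpa [Real.dist_eq] using hC hx hy
  have hub : ∀ x ∈ Ω, ∀ y ∈ Ω, |x - y| ≤ s := fun x hx y hy => by
    rw [hs]; exact le_csSup hbdd' ⟨x, hx, y, hy, rfl⟩
  have hs0 : 0 ≤ s := le_trans (abs_nonneg _) (hub _ h1 _ h1)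
  set c12 := min |F1.2 - F2.2| 1 with hc12
  set c13 := min |F1.2 - F3.2| 1 with hc13
  set c23 := min |F2.2 - F3.2| 1 with hc23
  have ht : c23 ≤ c12 + c13 := by
    have := min_tri F2.2 F1.2 F3.2
    simpa [hc12, hc13, hc23, abs_sub_comm F2.2 F1.2] using this
  have hc12a : 0 ≤ c12 := le_min (abs_nonneg _) zero_le_one
  have hc13a : 0 ≤ c13 := le_min (abs_nonneg _) zero_le_one
  have hc23a : 0 ≤ c23 := le_min (abs_nonneg _) zero_le_one
  have hc12b : c12 ≤ 1 := min_le_right _ _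
  have hc13b : c13 ≤ 1 := min_le_right _ _
  have hc23b : c23 ≤ 1 := min_le_right _ _
  have hd12 : |F1.1 - F2.1| ≤ s := hub _ h1 _ h2
  have hd13 : |F1.1 - F3.1| ≤ s := hub _ h1 _ h3
  have hd23 : |F2.1 - F3.1| ≤ s := hub _ h2 _ h3
  have hdt : |F2.1 - F3.1| ≤ |F1.1 - F2.1| + |F1.1 - F3.1| := by
    have := abs_sub_le F2.1 F1.1 F3.1
    simpa [abs_sub_comm F2.1 F1.1] using this
  have hd12n : 0 ≤ |F1.1 - F2.1| := abs_nonneg _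
  have hd13n : 0 ≤ |F1.1 - F3.1| := abs_nonneg _
  have hd23n : 0 ≤ |F2.1 - F3.1| := abs_nonneg _
  unfold gD
  rcases le_total (c12 + c13) 1 with h | h
  · nlinarith [mul_nonneg hc13a hd12n, mul_nonneg hc12a hd13n,
      mul_nonneg (sub_nonneg.mpr hc23b) (sub_nonneg.mpr hd23),
      mul_nonneg hc23a (sub_nonneg.mpr hd23),
      mul_nonneg (sub_nonneg.mpr h) (sub_nonneg.mpr hdt)]
  · nlinarith [mul_nonneg (sub_nonneg.mpr hc12b) hd12n,
      mul_nonneg (sub_nonneg.mpr hc13b) hd13n,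
      mul_nonneg (sub_nonneg.mpr hc23b) (sub_nonneg.mpr hd23),
      mul_nonneg hc23a (sub_nonneg.mpr hd23),
      mul_nonneg (sub_nonneg.mpr (le_trans hc12b (by linarith : (1:ℝ) ≤ c12 + c13))) hs0]
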